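/- Let U ⊆ ℂ be open, let z₀ ∈ U, and let w, L : U → ℂ be functions that are complex differentiable at z₀. Assume that for every z ∈ U one has z·w(z)³ − w(z)² − z·w(z) + 1/3 = 0, w(z)·(w(z)² − 1) ≠ 0, and exp(L(z)) = w(z)·(w(z)² − 1) (so L is a branch of log[w(w² − 1)]). Then the function z ↦ 3z·w(z) − L(z) is complex differentiable at z₀ with derivative equal to 3·w(z₀). -/

import Mathlib

theorem hasDerivAt_g_integrand (U : Set ℂ) (hU : IsOpen U) (z₀ : ℂ) (hz₀ : z₀ ∈ U)
    (w L : ℂ → ℂ)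
    (hw : DifferentiableAt ℂ w z₀) (hL : DifferentiableAt ℂ L z₀)
    (hcubic : ∀ z ∈ U, z * w z ^ 3 - w z ^ 2 - z * w z + 1 / 3 = 0)
    (hne : ∀ z ∈ U, w z * (w z ^ 2 - 1) ≠ 0)
    (hlog : ∀ z ∈ U, Complex.exp (L z) = w z * (w z ^ 2 - 1)) :
    HasDerivAt (fun z : ℂ => 3 * z * w z - L z) (3 * w z₀) z₀ := by
  set w' := deriv w z₀ with hw'
  set L' := deriv L z₀ with hL'
  have hwD : HasDerivAt w w' z₀ := hw.hasDerivAt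
  have hLD : HasDerivAt L L' z₀ := hL.hasDerivAt
  have hUnhds : U ∈ nhds z₀ := hU.mem_nhds hz₀
  -- exp ∘ L has derivative exp(L z₀) * L'
  have h1 : HasDerivAt (fun z => Complex.exp (L z)) (Complex.exp (L z₀) * L') z₀ :=
    hLD.cexp
  -- exp ∘ L = w*(w²-1) eventually
  have heq : (fun z => Complex.exp (L z)) =ᶠ[nhds z₀] (fun z => w z * (w z ^ 2 - 1)) :=
    Filter.eventuallyEq_of_mem hUnhds (fun z hz => hlog z hz)
  have h2 : HasDerivAt (fun z => w z * (w z ^ 2 - 1)) (Complex.exp (L z₀) * L') z₀ :=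
    h1.congr_of_eventuallyEq heq.symm
  -- direct computation of the derivative of w*(w²-1)
  have h3 : HasDerivAt (fun z => w z * (w z ^ 2 - 1))
      (w' * (w z₀ ^ 2 - 1) + w z₀ * (2 * w z₀ * w')) z₀ := by
    have := hwD.mul (((hwD.pow 2).sub_const 1))
    refine this.congr_deriv ?_
    push_cast [Pi.pow_apply]
    ring
  have hderiv_eq : Complex.exp (L z₀) * L' = w' * (w z₀ ^ 2 - 1) + w z₀ * (2 * w z₀ * w') :=
    h2.unique h3
  have hexp : Complex.exp (L z₀) = w z₀ * (w z₀ ^ 2 - 1) := hlog z₀ hz₀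
  have hne0 : w z₀ * (w z₀ ^ 2 - 1) ≠ 0 := hne z₀ hz₀
  have hcub : z₀ * w z₀ ^ 3 - w z₀ ^ 2 - z₀ * w z₀ + 1 / 3 = 0 := hcubic z₀ hz₀
  -- L' = 3 z₀ w'
  have hkey : L' = 3 * z₀ * w' := by
    have h4 : w z₀ * (w z₀ ^ 2 - 1) * L' = w' * (3 * w z₀ ^ 2 - 1) := by
      rw [hexp] at hderiv_eq
      linear_combination hderiv_eq
    have h5 : w z₀ * (w z₀ ^ 2 - 1) * L' = w z₀ * (w z₀ ^ 2 - 1) * (3 * z₀ * w') := by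
      rw [h4]; linear_combination (-3 * w') * hcub
    exact mul_left_cancel₀ hne0 h5
  have hmain : HasDerivAt (fun z : ℂ => 3 * z * w z - L z)
      ((3 * w z₀ + 3 * z₀ * w') - L') z₀ := by
    have hlin : HasDerivAt (fun z : ℂ => 3 * z) 3 z₀ := by
      simpa using (hasDerivAt_id z₀).const_mul (3 : ℂ)
    have := (hlin.mul hwD).sub hLD
    exact this
  have : (3 * w z₀ + 3 * z₀ * w') - L' = 3 * w z₀ := by rw [hkey]; ring
  rwa [this] at hmain
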